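/- Let Ψ ∈ ℂ^{N×P} have unit-norm columns with mutual coherence μ = max_{i≠j}|ψᵢᴴψⱼ|. If x⁰ is s-sparse with s < (1 + 1/μ)/2, then x⁰ is the unique s-sparse solution of Ψx = Ψx⁰. -/

import Mathlib

open Finset

theorem coherence_sparse_uniqueness {N P : ℕ} (Ψ : Matrix (Fin N) (Fin P) ℂ)
    (hunit : ∀ k : Fin P, ∑ i, ‖Ψ i k‖ ^ 2 = 1)
    (μ : ℝ) (hμpos : 0 < μ)
    (hμ : ∀ i j : Fin P, i ≠ j →
      ‖∑ x, (starRingEnd ℂ) (Ψ x i) * Ψ x j‖ ≤ μ)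
    (s : ℕ) (hs : (s : ℝ) < (1 + 1 / μ) / 2) :
    ∀ x₀ x : Fin P → ℂ,
      (Finset.univ.filter (fun i => x₀ i ≠ 0)).card ≤ s →
      (Finset.univ.filter (fun i => x i ≠ 0)).card ≤ s →
      Ψ.mulVec x = Ψ.mulVec x₀ → x = x₀ := by
  intro x₀ x h₀ h₁ heq
  by_contra hne
  set d : Fin P → ℂ := x - x₀ with hd_def
  have hΨd : Ψ.mulVec d = 0 := by
    rw [hd_def, Matrix.mulVec_sub, heq, sub_self]
  set T : Finset (Fin P) := univ.filter (fun i => d i ≠ 0) with hT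
  have hTne : T.Nonempty := by
    by_contra h
    apply hne
    funext i
    have hdi : d i = 0 := by
      by_contra hdi
      exact h ⟨i, by simp [hT, hdi]⟩
    exact sub_eq_zero.mp hdi
  have hTcard : (T.card : ℝ) ≤ 2 * s := by
    have hsub : T ⊆ (univ.filter (fun i => x i ≠ 0)) ∪ (univ.filter (fun i => x₀ i ≠ 0)) := by
      intro j hj
      have hdj : d j ≠ 0 := (mem_filter.mp hj).2
      simp only [mem_union, mem_filter, mem_univ, true_and]
      by_contra hc
      push_neg at hc
      apply hdj
      show x j - x₀ j = 0
      rw [hc.1, hc.2, sub_self]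
    have := (Finset.card_le_card hsub).trans (Finset.card_union_le _ _)
    have h2 : T.card ≤ 2 * s := by omega
    exact_mod_cast h2
  obtain ⟨i, hiT, hmax⟩ := T.exists_max_image (fun j => ‖d j‖) hTne
  have hdi : d i ≠ 0 := (mem_filter.mp hiT).2
  have hdipos : 0 < ‖d i‖ := norm_pos_iff.mpr hdi
  -- Gram equation
  have key : ∑ j, (∑ y, (starRingEnd ℂ) (Ψ y i) * Ψ y j) * d j = 0 := by
    have h0 : ∑ y, (starRingEnd ℂ) (Ψ y i) * (Ψ.mulVec d) y = 0 := by
      simp [hΨd]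
    rw [← h0]
    simp only [Matrix.mulVec, dotProduct, Finset.mul_sum, Finset.sum_mul]
    rw [Finset.sum_comm]
    exact Finset.sum_congr rfl fun y _ => Finset.sum_congr rfl fun j _ => by ring
  have hGii : (∑ y, (starRingEnd ℂ) (Ψ y i) * Ψ y i) = 1 := by
    have : ∀ y, (starRingEnd ℂ) (Ψ y i) * Ψ y i = ((‖Ψ y i‖ ^ 2 : ℝ) : ℂ) := by
      intro y
      rw [mul_comm, Complex.mul_conj, Complex.normSq_eq_norm_sq]
    rw [Finset.sum_congr rfl fun y _ => this y, ← Complex.ofReal_sum, hunit i]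
    norm_num
  have hsplit : d i = - ∑ j ∈ univ.erase i, (∑ y, (starRingEnd ℂ) (Ψ y i) * Ψ y j) * d j := by
    rw [← Finset.add_sum_erase univ _ (mem_univ i), hGii, one_mul] at key
    exact eq_neg_of_add_eq_zero_left key
  have hbound : ‖d i‖ ≤ μ * ((T.card : ℝ) - 1) * ‖d i‖ := by
    calc ‖d i‖
        = ‖∑ j ∈ univ.erase i, (∑ y, (starRingEnd ℂ) (Ψ y i) * Ψ y j) * d j‖ := by
          rw [hsplit, norm_neg]
      _ ≤ ∑ j ∈ univ.erase i, ‖(∑ y, (starRingEnd ℂ) (Ψ y i) * Ψ y j) * d j‖ :=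
          norm_sum_le _ _
      _ = ∑ j ∈ T.erase i, ‖(∑ y, (starRingEnd ℂ) (Ψ y i) * Ψ y j) * d j‖ := by
          refine (Finset.sum_subset ?_ ?_).symm
          · exact Finset.erase_subset_erase i (Finset.subset_univ T)
          · intro j hj hjT
            have hji : j ≠ i := (Finset.mem_erase.mp hj).1
            have : d j = 0 := by
              by_contra hdj
              exact hjT (Finset.mem_erase.mpr ⟨hji, by simp [hT, hdj]⟩)
            simp [this]
      _ ≤ ∑ j ∈ T.erase i, μ * ‖d i‖ := by
          refine Finset.sum_le_sum fun j hj => ?_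
          rw [norm_mul]
          have hji : j ≠ i := (Finset.mem_erase.mp hj).1
          have h1 := hμ i j (fun h => hji h.symm)
          have h2 := hmax j (Finset.mem_of_mem_erase hj)
          have : (0:ℝ) ≤ ‖d j‖ := norm_nonneg _
          nlinarith [norm_nonneg (∑ y, (starRingEnd ℂ) (Ψ y i) * Ψ y j)]
      _ = ((T.erase i).card : ℝ) * (μ * ‖d i‖) := by
          rw [Finset.sum_const, nsmul_eq_mul]
      _ = μ * ((T.card : ℝ) - 1) * ‖d i‖ := by
          rw [Finset.card_erase_of_mem hiT]
          have h1 : 1 ≤ T.card := Finset.card_pos.mpr hTne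
          have : ((T.card - 1 : ℕ) : ℝ) = (T.card : ℝ) - 1 := by
            push_cast [h1]; ring
          rw [this]; ring
  have hlt : μ * ((T.card : ℝ) - 1) < 1 := by
    have h1 : (T.card : ℝ) - 1 < 1 / μ := by
      have : (2 : ℝ) * s < 1 + 1 / μ := by linarith
      linarith
    calc μ * ((T.card : ℝ) - 1) < μ * (1 / μ) := by
          apply mul_lt_mul_of_pos_left h1 hμpos
      _ = 1 := by field_simp
  nlinarith
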